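/- Let B be a complete cyclic 2-skew-tolerant binary Gray code of length 2n, and let φ: (Z/2)^{2n} → (Z/4)^n be the map applying φ(00)=0, φ(01)=1, φ(11)=2, φ(10)=3 to each consecutive non-overlapping pair of bits. Then φ(B) is a complete cyclic quaternary 1-skew-tolerant Gray code of length n: its 4^n codewords are distinct, cyclically consecutive codewords differ by ±1 (mod 4) in exactly one coordinate, and cyclically consecutive transition positions differ by at most 1. -/
import Mathlib


/-- Codewords `c` and `d` differ exactly at coordinate `i` (1-based), by `±1` there. -/
def TransAt {m : ℕ} (c d : List (ZMod m)) (i : ℕ) : Prop :=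
  1 ≤ i ∧ i ≤ c.length ∧ c.length = d.length ∧
  c.take (i-1) = d.take (i-1) ∧ c.drop i = d.drop i ∧
  (d.getD (i-1) 0 = c.getD (i-1) 0 + 1 ∨ d.getD (i-1) 0 = c.getD (i-1) 0 - 1)

/-- `C` is a cyclic Gray code with transition sequence `δ`. -/
def CyclicGrayWith {m : ℕ} (C : List (List (ZMod m))) (δ : ℕ → ℕ) : Prop :=
  C.Nodup ∧ ∀ i < C.length,
    TransAt (C.getD i []) (C.getD ((i+1) % C.length) []) (δ i)

/-- cyclic `k`-skew-tolerance of a transition sequence. -/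
def SkewCyc (P : ℕ) (δ : ℕ → ℕ) (k : ℤ) : Prop :=
  ∀ i < P, |(δ i : ℤ) - (δ ((i+1) % P) : ℤ)| ≤ k


/-- The 2-bit reflected Gray code labeling: `00↦0, 01↦1, 11↦2, 10↦3`. -/
def phi (a b : ZMod 2) : ZMod 4 :=
  if a = 0 then (if b = 0 then 0 else 1) else (if b = 0 then 3 else 2)

/-- Apply `phi` to consecutive non-overlapping pairs of bits. -/
def phiL : List (ZMod 2) → List (ZMod 4)
  | a :: b :: rest => phi a b :: phiL rest
  | _ => []


section Aux

lemma phiL_length : ∀ l : List (ZMod 2), (phiL l).length = l.length / 2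
  | [] => rfl
  | [_] => by simp [phiL]
  | _ :: _ :: r => by simp [phiL, phiL_length r]; omega

lemma phiL_append : ∀ u v : List (ZMod 2), Even u.length →
    phiL (u ++ v) = phiL u ++ phiL v
  | [], _, _ => rfl
  | [_], _, h => by simp [Nat.even_iff] at h
  | a :: b :: r, v, h => by
    have h' : Even r.length := by
      simp only [List.length_cons, Nat.even_iff] at h
      exact Nat.even_iff.mpr (by omega)
    show phi a b :: phiL (r ++ v) = phi a b :: (phiL r ++ phiL v)
    rw [phiL_append r v h']

/-- inverse of `phi`, as a pair -/
def psi (x : ZMod 4) : ZMod 2 × ZMod 2 :=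
  if x = 0 then (0,0) else if x = 1 then (0,1) else if x = 2 then (1,1) else (1,0)

def psiL : List (ZMod 4) → List (ZMod 2)
  | [] => []
  | x :: r => (psi x).1 :: (psi x).2 :: psiL r

lemma phi_psi : ∀ x : ZMod 4, phi (psi x).1 (psi x).2 = x := by decide
lemma psi_phi : ∀ a b : ZMod 2, psi (phi a b) = (a, b) := by decide

lemma phiL_psiL : ∀ d : List (ZMod 4), phiL (psiL d) = d
  | [] => rfl
  | x :: r => by simp [psiL, phiL, phi_psi, phiL_psiL r]

lemma psiL_phiL : ∀ l : List (ZMod 2), Even l.length → psiL (phiL l) = l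
  | [], _ => rfl
  | [_], h => by simp [Nat.even_iff] at h
  | a :: b :: r, h => by
    have h' : Even r.length := by
      simp only [List.length_cons, Nat.even_iff] at h
      exact Nat.even_iff.mpr (by omega)
    simp [phiL, psiL, psi_phi, psiL_phiL r h']

lemma psiL_length : ∀ d : List (ZMod 4), (psiL d).length = 2 * d.length
  | [] => rfl
  | _ :: r => by simp [psiL, psiL_length r]; omega

lemma transAt_of_split {m : ℕ} (U V : List (ZMod m)) (x y : ZMod m)
    (h : y = x + 1 ∨ y = x - 1) :
    TransAt (U ++ x :: V) (U ++ y :: V) (U.length + 1) := by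
  have hx : U ++ x :: V = (U ++ [x]) ++ V := by simp
  have hy : U ++ y :: V = (U ++ [y]) ++ V := by simp
  refine ⟨by omega, ?_, by simp, ?_, ?_, ?_⟩
  · simp only [List.length_append, List.length_cons]; omega
  · simp only [Nat.add_sub_cancel, List.take_left]
  · rw [hx, hy, List.drop_left' (by simp), List.drop_left' (by simp)]
  · have h1 : (U ++ x :: V).getD (U.length + 1 - 1) 0 = x := by
      rw [Nat.add_sub_cancel, List.getD_append_right _ _ _ _ le_rfl, Nat.sub_self]; rfl
    have h2 : (U ++ y :: V).getD (U.length + 1 - 1) 0 = y := by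
      rw [Nat.add_sub_cancel, List.getD_append_right _ _ _ _ le_rfl, Nat.sub_self]; rfl
    rw [h1, h2]; exact h

lemma phi_flip_fst : ∀ a b : ZMod 2,
    phi (a+1) b = phi a b + 1 ∨ phi (a+1) b = phi a b - 1 := by decide
lemma phi_flip_snd : ∀ a b : ZMod 2,
    phi a (b+1) = phi a b + 1 ∨ phi a (b+1) = phi a b - 1 := by decide

lemma phiL_transAt (c d : List (ZMod 2)) (i : ℕ) (hev : Even c.length)
    (h : TransAt c d i) : TransAt (phiL c) (phiL d) ((i-1)/2 + 1) := by
  obtain ⟨h1, h2, hlen, htake, hdrop, hbit⟩ := h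
  have hbit' : d.getD (i-1) 0 = c.getD (i-1) 0 + 1 := by
    rcases hbit with h' | h'
    · exact h'
    · rw [h']; generalize c.getD (i-1) 0 = x; revert x; decide
  set p := 2 * ((i-1)/2) with hp
  have hplt : p + 1 < c.length := by rcases hev with ⟨k, hk⟩; omega
  have hplt' : p < c.length := by omega
  set u := c.take p with hu
  have hul : u.length = p := by rw [hu, List.length_take]; omega
  set a := c.getD p 0 with ha
  set b := c.getD (p+1) 0 with hb
  set v := c.drop (p+2) with hv
  have hc : c = u ++ a :: b :: v := by
    conv_lhs => rw [← List.take_append_drop p c]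
    rw [List.drop_eq_getElem_cons hplt', List.drop_eq_getElem_cons hplt,
      ← List.getD_eq_getElem c 0 hplt', ← List.getD_eq_getElem c 0 hplt,
      ← ha, ← hb, ← hv, ← hu]
  have hueven : Even u.length := by rw [hul]; exact ⟨(i-1)/2, by omega⟩
  have hphic : phiL c = phiL u ++ phi a b :: phiL v := by
    rw [hc, phiL_append _ _ hueven]; rfl
  have hlu : (phiL u).length = (i-1)/2 := by rw [phiL_length, hul]; omega
  rcases Nat.lt_or_ge (i-1) (p+1) with hcase | hcase
  · -- i - 1 = p : first bit of pair flipped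
    have hip : i - 1 = p := by omega
    have hd : d = u ++ (a+1) :: b :: v := by
      have t1 : d.take p = u := by rw [hu, ← hip, ← htake]
      have t2 : d.drop (p+1) = b :: v := by
        have hcd : c.drop (p+1) = b :: v := by
          rw [hv, List.drop_eq_getElem_cons hplt, ← List.getD_eq_getElem c 0 hplt, ← hb]
        rw [show p + 1 = i by omega, ← hdrop, show i = p + 1 by omega]
        exact hcd
      have t3 : d.getD p 0 = a + 1 := by
        rw [ha, ← hip]; exact hbit'
      conv_lhs => rw [← List.take_append_drop p d]
      rw [List.drop_eq_getElem_cons (show p < d.length by omega),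
        ← List.getD_eq_getElem d 0 (show p < d.length by omega), t1, t2, t3]
    rw [hphic, hd, phiL_append _ _ hueven]
    have := transAt_of_split (phiL u) (phiL v) (phi a b) (phi (a+1) b) (phi_flip_fst a b)
    rw [hlu] at this
    exact this
  · -- i - 1 = p + 1 : second bit of pair flipped
    have hip : i - 1 = p + 1 := by omega
    have hd : d = u ++ a :: (b+1) :: v := by
      have t1 : d.take (p+1) = u ++ [a] := by
        rw [← hip, ← htake, hip, List.take_succ, List.getElem?_eq_getElem hplt',
          ← List.getD_eq_getElem c 0 hplt', ← ha, ← hu]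
        rfl
      have t2 : d.drop (p+2) = v := by
        rw [show p + 2 = i by omega, ← hdrop, show i = p + 2 by omega]
      have t3 : d.getD (p+1) 0 = b + 1 := by
        rw [hb, ← hip]; exact hbit'
      conv_lhs => rw [← List.take_append_drop (p+1) d]
      rw [List.drop_eq_getElem_cons (show p+1 < d.length by omega),
        ← List.getD_eq_getElem d 0 (show p+1 < d.length by omega), t1, t2, t3]
      simp
    rw [hphic, hd, phiL_append _ _ hueven]
    have := transAt_of_split (phiL u) (phiL v) (phi a b) (phi a (b+1)) (phi_flip_snd a b)
    rw [hlu] at this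
    exact this

end Aux

theorem stmt15 : ∀ n : ℕ, 1 ≤ n → ∀ B : List (List (ZMod 2)),
    (∀ c ∈ B, c.length = 2*n) → B.length = 2 ^ (2*n) → B.Nodup →
    (∀ c : List (ZMod 2), c.length = 2*n → c ∈ B) →
    (∃ δ : ℕ → ℕ, (∀ i < B.length,
        TransAt (B.getD i []) (B.getD ((i+1) % B.length) []) (δ i)) ∧
      SkewCyc B.length δ 2) →
    (B.map phiL).Nodup ∧ (B.map phiL).length = 4 ^ n ∧
    (∀ c ∈ B.map phiL, c.length = n) ∧
    (∀ c : List (ZMod 4), c.length = n → c ∈ B.map phiL) ∧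
    ∃ δ' : ℕ → ℕ, CyclicGrayWith (B.map phiL) δ' ∧ SkewCyc (B.map phiL).length δ' 1 := by
  intro n hn B hBlen hBcard hBnodup hBcomplete ⟨δ, hδ, hskew⟩
  have hmaplen : (B.map phiL).length = B.length := by simp
  have heven : ∀ c ∈ B, Even c.length := fun c hc => ⟨n, by rw [hBlen c hc]; ring⟩
  have hinj : ∀ x ∈ B, ∀ y ∈ B, phiL x = phiL y → x = y := by
    intro x hx y hy hxy
    rw [← psiL_phiL x (heven x hx), ← psiL_phiL y (heven y hy), hxy]
  refine ⟨List.Nodup.map_on hinj hBnodup, ?_, ?_, ?_, ?_⟩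
  · rw [hmaplen, hBcard, pow_mul]; norm_num
  · intro c hc
    obtain ⟨b, hb, rfl⟩ := List.mem_map.mp hc
    rw [phiL_length, hBlen b hb]; omega
  · intro c hc
    refine List.mem_map.mpr ⟨psiL c, hBcomplete _ (by rw [psiL_length, hc]), phiL_psiL c⟩
  · refine ⟨fun k => (δ k - 1)/2 + 1, ⟨List.Nodup.map_on hinj hBnodup, ?_⟩, ?_⟩
    · intro i hi
      rw [hmaplen] at hi ⊢
      have hi2 : (i+1) % B.length < B.length := Nat.mod_lt _ (by omega)
      have g1 : (B.map phiL).getD i [] = phiL (B.getD i []) := by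
        rw [List.getD_eq_getElem _ _ (by rw [hmaplen]; exact hi),
          List.getElem_map, List.getD_eq_getElem _ _ hi]
      have g2 : (B.map phiL).getD ((i+1) % B.length) []
          = phiL (B.getD ((i+1) % B.length) []) := by
        rw [List.getD_eq_getElem _ _ (by rw [hmaplen]; exact hi2),
          List.getElem_map, List.getD_eq_getElem _ _ hi2]
      rw [g1, g2]
      have hmem : B.getD i [] ∈ B := by
        rw [List.getD_eq_getElem _ _ hi]; exact List.getElem_mem _
      exact phiL_transAt _ _ _ (heven _ hmem) (hδ i hi)
    · intro i hi
      rw [hmaplen] at hi ⊢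
      have hi2 : (i+1) % B.length < B.length := Nat.mod_lt _ (by omega)
      have hs := hskew i hi
      have hd1 : 1 ≤ δ i := (hδ i hi).1
      have hd2 : 1 ≤ δ ((i+1) % B.length) := (hδ _ hi2).1
      beta_reduce
      rw [abs_le] at hs ⊢
      omega
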